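/- There exists a constant $c > 0$ such that for all integers $n \geq 2$ and all $\mathbf{k} \in \{2,3,\dots\}^n$, the probability that the random directed graph $\vec{L}(n,\mathbf{k})$ contains no directed cycle is at most $\exp(-c\, n\, k^{n-2})$, where $k = \min_i k_i$. -/

import Mathlib

/-- Vertices of the Hamming graph `H(n,k)`: action profiles. -/
abbrev GVert (n : ℕ) (k : Fin n → ℕ) := ∀ i : Fin n, Fin (k i)

/-- Sample space of `L(n,k)`: for each coordinate `i` and each line in
coordinate `i` (encoded by the values on the remaining coordinates), a winner
(its `i`-th coordinate); chosen uniformly. -/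
abbrev LSpace (n : ℕ) (k : Fin n → ℕ) :=
  ∀ i : Fin n, ((∀ j : {j : Fin n // j ≠ i}, Fin (k j.1)) → Fin (k i))

/-- The best-response edge relation of `L(n,k)`: `u → v` iff `u ≠ v` lie on a
common line and `v` is the winner of that line. -/
def BREdge {n : ℕ} {k : Fin n → ℕ} (ω : LSpace n k) (u v : GVert n k) : Prop :=
  u ≠ v ∧ ∃ i : Fin n, (∀ j, j ≠ i → u j = v j) ∧ ω i (fun j => v j.1) = v i

/-- `L(n,k)` under the outcome `ω` contains a directed cycle. -/
def HasCycle {n : ℕ} {k : Fin n → ℕ} (ω : LSpace n k) : Prop :=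
  ∃ m : ℕ, ∃ _hm : 2 ≤ m, ∃ f : Fin m → GVert n k,
    Function.Injective f ∧ ∀ i : Fin m, BREdge ω (f i) (f (i + ⟨1, by omega⟩))


open Function

variable {L M : ℕ}

abbrev Cfg (L M : ℕ) := (Fin M → Fin L) × (Fin L → Fin M)

def chi (c : Cfg L M) : Fin L → Fin L := c.1 ∘ c.2

def Cyc (c : Cfg L M) : Prop := ∃ a p, 0 < p ∧ (chi c)^[p] a = a ∧ chi c a ≠ a

section chain
variable [NeZero L] [NeZero M]
set_option linter.unusedSectionVars false

def ach (c : Cfg L M) (t : ℕ) : Fin L := (chi c)^[t] 0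

def bch (c : Cfg L M) (t : ℕ) : Fin M := c.2 (ach c t)

lemma ach_zero (c : Cfg L M) : ach c 0 = 0 := rfl

lemma ach_succ (c : Cfg L M) (t : ℕ) : ach c (t + 1) = c.1 (bch c t) :=
  Function.iterate_succ_apply' (chi c) t 0

lemma exT (c : Cfg L M) : ∃ t, 0 < t ∧ ∃ s < t, ach c t = ach c s := by
  obtain ⟨x, y, hxy, he⟩ := Fintype.exists_ne_map_eq_of_card_lt
    (fun t : Fin (L + 1) => ach c t.1) (by simp)
  rcases lt_or_gt_of_ne hxy with h | h
  · exact ⟨y.1, by omega, x.1, h, he.symm⟩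
  · exact ⟨x.1, by omega, y.1, h, he⟩

noncomputable def TT (c : Cfg L M) : ℕ := Nat.find (exT c)

lemma T_pos (c : Cfg L M) : 0 < TT c := (Nat.find_spec (exT c)).1

lemma T_col (c : Cfg L M) : ∃ s < TT c, ach c (TT c) = ach c s :=
  (Nat.find_spec (exT c)).2

lemma achInj (c : Cfg L M) {s t : ℕ} (hst : s < t) (ht : t < TT c) :
    ach c t ≠ ach c s := by
  intro h
  exact Nat.find_min (exT c) ht ⟨by omega, s, hst, h⟩

lemma good_cyc (c : Cfg L M) {s : ℕ} (hs : s + 2 ≤ TT c)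
    (he : ach c (TT c) = ach c s) : Cyc c := by
  refine ⟨ach c s, TT c - s, by omega, ?_, ?_⟩
  · have h2 : ach c (TT c) = (chi c)^[TT c - s] (ach c s) := by
      show (chi c)^[TT c] 0 = _
      conv_lhs => rw [show TT c = (TT c - s) + s by omega]
      exact Function.iterate_add_apply _ _ _ _
    rw [← h2, he]
  · have h1 : chi c (ach c s) = ach c (s + 1) :=
      (Function.iterate_succ_apply' (chi c) s 0).symm
    rw [h1]
    exact achInj c (by omega) (by omega)

lemma notCyc_bad (c : Cfg L M) (h : ¬ Cyc c) :
    ach c (TT c) = ach c (TT c - 1) := by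
  obtain ⟨s, hs, he⟩ := T_col c
  by_cases hst : s = TT c - 1
  · rwa [hst] at he
  · exact absurd (good_cyc c (by omega) he) h
end chain

section surgery
variable [NeZero L] [NeZero M]
set_option linter.unusedSectionVars false

lemma T_ge2 (c : Cfg L M) (h1 : ach c 1 ≠ 0) : 2 ≤ TT c := by
  have := T_pos c
  rcases Nat.lt_or_ge (TT c) 2 with h | h
  · exfalso
    have ht : TT c = 1 := by omega
    obtain ⟨s, hs, he⟩ := T_col c
    rw [ht] at he hs
    interval_cases s
    exact h1 (by rw [← ach_zero c, ← he])
  · exact h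

/-- Type A surgery: redirect the final `u`-draw to `0`. -/
noncomputable def sgA (c : Cfg L M) : Cfg L M :=
  (update c.1 (bch c (TT c - 1)) 0, c.2)

def Bdis (c : Cfg L M) : Prop := ∀ t < TT c, ∀ r < t, bch c t ≠ bch c r

variable {c : Cfg L M}

lemma prefA (hbd : Bdis c) : ∀ t, t ≤ TT c - 1 → ach (sgA c) t = ach c t := by
  intro t
  induction t with
  | zero => intro _; rfl
  | succ t ih =>
    intro ht
    have h1 : ach (sgA c) t = ach c t := ih (by omega)
    rw [ach_succ, ach_succ]
    show update c.1 (bch c (TT c - 1)) 0 (bch (sgA c) t) = _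
    have h2 : bch (sgA c) t = bch c t := by
      show c.2 _ = c.2 _
      rw [h1]
    have hT := T_pos c
    rw [h2, update_of_ne (Ne.symm (hbd (TT c - 1) (by omega) t (by omega)))]

lemma achA_T (hbd : Bdis c) : ach (sgA c) (TT c) = 0 := by
  have := T_pos c
  have h1 : TT c = (TT c - 1) + 1 := by omega
  rw [h1, ach_succ]
  show update c.1 (bch c (TT c - 1)) 0 (bch (sgA c) (TT c - 1)) = 0
  have h2 : bch (sgA c) (TT c - 1) = bch c (TT c - 1) := by
    show c.2 _ = c.2 _
    rw [prefA hbd _ le_rfl]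
  rw [h2, update_self]

lemma TA_eq (hbd : Bdis c) : TT (sgA c) = TT c := by
  have hle : TT (sgA c) ≤ TT c :=
    Nat.find_le ⟨T_pos c, 0, T_pos c, by rw [achA_T hbd]; rfl⟩
  rcases Nat.lt_or_ge (TT (sgA c)) (TT c) with h | h
  · exfalso
    obtain ⟨s, hs, he⟩ := T_col (sgA c)
    rw [prefA hbd _ (by omega), prefA hbd _ (by omega)] at he
    exact achInj c hs h he
  · omega
end surgery

section surgery2
variable [NeZero L] [NeZero M] {c : Cfg L M}
set_option linter.unusedSectionVars false

lemma bchA (hbd : Bdis c) {t : ℕ} (ht : t ≤ TT c - 1) :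
    bch (sgA c) t = bch c t := by
  show c.2 _ = c.2 _
  rw [prefA hbd _ ht]

lemma goodA (hbd : Bdis c) (h1 : ach c 1 ≠ 0) : Cyc (sgA c) := by
  have h2 := T_ge2 c h1
  refine good_cyc (sgA c) (s := 0) (by rw [TA_eq hbd]; omega) ?_
  rw [TA_eq hbd, achA_T hbd]; rfl

lemma S2A (hbd : Bdis c) (h1 : ach c 1 ≠ 0) (h2 : bch c 1 ≠ bch c 0) :
    ach (sgA c) 1 ≠ 0 ∧ bch (sgA c) 1 ≠ bch (sgA c) 0 := by
  have hT := T_ge2 c h1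
  rw [prefA hbd 1 (by omega), bchA hbd (by omega : (1:ℕ) ≤ TT c - 1),
    bchA hbd (by omega : (0:ℕ) ≤ TT c - 1)]
  exact ⟨h1, h2⟩

lemma sigA (hbd : Bdis c) : ach (sgA c) (TT (sgA c)) = 0 := by
  rw [TA_eq hbd, achA_T hbd]

lemma recA (hbd : Bdis c) (hbad : ach c (TT c) = ach c (TT c - 1)) :
    update (sgA c).1 (bch (sgA c) (TT (sgA c) - 1))
      (ach (sgA c) (TT (sgA c) - 1)) = c.1 ∧ (sgA c).2 = c.2 := by
  refine ⟨?_, rfl⟩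
  have hT := T_pos c
  rw [TA_eq hbd, bchA hbd (le_refl (TT c - 1)), prefA hbd _ (le_refl (TT c - 1))]
  show update (update c.1 (bch c (TT c - 1)) 0) (bch c (TT c - 1)) (ach c (TT c - 1)) = c.1
  rw [update_idem, ← hbad]
  have : ach c (TT c) = c.1 (bch c (TT c - 1)) := by
    conv_lhs => rw [show TT c = (TT c - 1) + 1 by omega]
    exact ach_succ c (TT c - 1)
  rw [this, update_eq_self]

end surgery2

section surgery3
variable [NeZero L] [NeZero M] {c : Cfg L M}
set_option linter.unusedSectionVars false

lemma exB (hnb : ¬ Bdis c) : ∃ t, t < TT c ∧ ∃ r < t, bch c t = bch c r := by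
  unfold Bdis at hnb
  push_neg at hnb
  obtain ⟨t, ht, r, hr, he⟩ := hnb
  exact ⟨t, ht, r, hr, he⟩

noncomputable def sB (c : Cfg L M) : ℕ :=
  if h : ∃ t, t < TT c ∧ ∃ r < t, bch c t = bch c r then Nat.find h else 0

lemma sB_lt (hnb : ¬ Bdis c) : sB c < TT c := by
  rw [sB, dif_pos (exB hnb)]
  exact (Nat.find_spec (exB hnb)).1

lemma sB_col (hnb : ¬ Bdis c) : ∃ r < sB c, bch c (sB c) = bch c r := by
  rw [sB, dif_pos (exB hnb)]
  exact (Nat.find_spec (exB hnb)).2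

lemma sB_min (hnb : ¬ Bdis c) {t : ℕ} (ht : t < sB c) {r : ℕ} (hr : r < t) :
    bch c t ≠ bch c r := by
  have h2 := sB_lt hnb
  have htT : t < TT c := lt_trans ht h2
  rw [sB, dif_pos (exB hnb)] at ht
  intro he
  exact Nat.find_min (exB hnb) ht ⟨htT, r, hr, he⟩

lemma TB_eq (hnb : ¬ Bdis c) : TT c = sB c + 1 := by
  obtain ⟨r, hr, he⟩ := sB_col hnb
  have h1 : ach c (sB c + 1) = ach c (r + 1) := by
    rw [ach_succ, ach_succ, he]
  have hle : TT c ≤ sB c + 1 := Nat.find_le ⟨by omega, r + 1, by omega, h1⟩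
  have := sB_lt hnb
  omega
end surgery3

section surgery4
variable [NeZero L] [NeZero M] {c : Cfg L M}
set_option linter.unusedSectionVars false

lemma rB (hnb : ¬ Bdis c) (hbad : ach c (TT c) = ach c (TT c - 1)) :
    bch c (sB c) = bch c (sB c - 1) ∧ 1 ≤ sB c := by
  obtain ⟨r, hr, he⟩ := sB_col hnb
  have hT := TB_eq hnb
  have h1 : ach c (sB c + 1) = ach c (r + 1) := by
    rw [ach_succ, ach_succ, he]
  have h2 : ach c (sB c + 1) = ach c (sB c) := by
    rw [hT] at hbad
    simpa using hbad
  -- r + 1 = sB c, else contradiction with achInj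
  have h3 : r + 1 = sB c := by
    by_contra hne
    exact achInj c (show r + 1 < sB c by omega) (by omega)
      (h1.symm.trans h2).symm
  constructor
  · rw [show sB c - 1 = r by omega]; exact he
  · omega

lemma sB_ge2 (hnb : ¬ Bdis c) (h2 : bch c 1 ≠ bch c 0) : 2 ≤ sB c := by
  obtain ⟨r, hr, he⟩ := sB_col hnb
  rcases Nat.lt_or_ge (sB c) 2 with h | h
  · exfalso
    interval_cases hs : sB c
    · omega
    · have : r = 0 := by omega
      rw [this] at he
      exact h2 he
  · exact h
end surgery4

section surgery5
variable [NeZero L] [NeZero M] {c : Cfg L M}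
set_option linter.unusedSectionVars false

/-- Type B surgery: redirect the final fresh `v`-draw to `bch c 0`. -/
noncomputable def sgB (c : Cfg L M) : Cfg L M :=
  (c.1, update c.2 (ach c (sB c)) (bch c 0))

lemma prefBa (hnb : ¬ Bdis c) : ∀ t, t ≤ sB c → ach (sgB c) t = ach c t := by
  have hT := TB_eq hnb
  intro t
  induction t with
  | zero => intro _; rfl
  | succ t ih =>
    intro ht
    have h1 : ach (sgB c) t = ach c t := ih (by omega)
    rw [ach_succ, ach_succ]
    show c.1 (update c.2 (ach c (sB c)) (bch c 0) (ach (sgB c) t)) = c.1 (c.2 (ach c t))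
    rw [h1, update_of_ne (Ne.symm (achInj c (show t < sB c by omega) (by omega)))]

lemma prefBb (hnb : ¬ Bdis c) {t : ℕ} (ht : t < sB c) :
    bch (sgB c) t = bch c t := by
  have hT := TB_eq hnb
  show update c.2 (ach c (sB c)) (bch c 0) (ach (sgB c) t) = c.2 (ach c t)
  rw [prefBa hnb t (by omega), update_of_ne (Ne.symm (achInj c ht (by omega)))]

lemma bchB_s (hnb : ¬ Bdis c) : bch (sgB c) (sB c) = bch c 0 := by
  show update c.2 (ach c (sB c)) (bch c 0) (ach (sgB c) (sB c)) = bch c 0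
  rw [prefBa hnb _ le_rfl, update_self]

lemma achB_succ (hnb : ¬ Bdis c) : ach (sgB c) (sB c + 1) = ach c 1 := by
  rw [ach_succ, bchB_s hnb]
  exact (ach_succ c 0).symm

lemma TB'_eq (hnb : ¬ Bdis c) (h1 : ach c 1 ≠ 0) (h2 : bch c 1 ≠ bch c 0) :
    TT (sgB c) = sB c + 1 := by
  have hT := TB_eq hnb
  have hs2 := sB_ge2 hnb h2
  have hcol : ach (sgB c) (sB c + 1) = ach (sgB c) 1 := by
    rw [achB_succ hnb, prefBa hnb 1 (by omega)]
  have hle : TT (sgB c) ≤ sB c + 1 :=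
    Nat.find_le ⟨by omega, 1, by omega, hcol⟩
  rcases Nat.lt_or_ge (TT (sgB c)) (sB c + 1) with h | h
  · exfalso
    obtain ⟨s, hs, he⟩ := T_col (sgB c)
    rw [prefBa hnb _ (by omega), prefBa hnb _ (by omega)] at he
    exact achInj c hs (by omega) he
  · omega

lemma goodB (hnb : ¬ Bdis c) (h1 : ach c 1 ≠ 0) (h2 : bch c 1 ≠ bch c 0) :
    Cyc (sgB c) := by
  have hs2 := sB_ge2 hnb h2
  refine good_cyc (sgB c) (s := 1) (by rw [TB'_eq hnb h1 h2]; omega) ?_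
  rw [TB'_eq hnb h1 h2, achB_succ hnb, prefBa hnb 1 (by omega)]

lemma S2B (hnb : ¬ Bdis c) (h1 : ach c 1 ≠ 0) (h2 : bch c 1 ≠ bch c 0) :
    ach (sgB c) 1 ≠ 0 ∧ bch (sgB c) 1 ≠ bch (sgB c) 0 := by
  have hs2 := sB_ge2 hnb h2
  rw [prefBa hnb 1 (by omega), prefBb hnb (by omega : (1:ℕ) < sB c),
    prefBb hnb (by omega : (0:ℕ) < sB c)]
  exact ⟨h1, h2⟩

lemma sigB (hnb : ¬ Bdis c) (h1 : ach c 1 ≠ 0) (h2 : bch c 1 ≠ bch c 0) :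
    ach (sgB c) (TT (sgB c)) ≠ 0 := by
  rw [TB'_eq hnb h1 h2, achB_succ hnb]
  exact h1

lemma recB (hnb : ¬ Bdis c) (hbad : ach c (TT c) = ach c (TT c - 1))
    (h1 : ach c 1 ≠ 0) (h2 : bch c 1 ≠ bch c 0) :
    (sgB c).1 = c.1 ∧
    update (sgB c).2 (ach (sgB c) (TT (sgB c) - 1))
      (bch (sgB c) (TT (sgB c) - 2)) = c.2 := by
  refine ⟨rfl, ?_⟩
  have hs2 := sB_ge2 hnb h2
  have hT' := TB'_eq hnb h1 h2
  have hr := rB hnb hbad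
  rw [hT']
  have e1 : sB c + 1 - 1 = sB c := by omega
  have e2 : sB c + 1 - 2 = sB c - 1 := by omega
  rw [e1, e2, prefBa hnb _ le_rfl, prefBb hnb (by omega)]
  show update (update c.2 (ach c (sB c)) (bch c 0)) (ach c (sB c)) (bch c (sB c - 1)) = c.2
  rw [update_idem, ← hr.1]
  exact update_eq_self _ _

end surgery5

lemma ach_one [NeZero L] [NeZero M] (c : Cfg L M) : ach c 1 = c.1 (c.2 0) := rfl
lemma bch_zero [NeZero L] [NeZero M] (c : Cfg L M) : bch c 0 = c.2 0 := rfl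
lemma bch_one [NeZero L] [NeZero M] (c : Cfg L M) : bch c 1 = c.2 (ach c 1) := rfl

theorem plane_count {L M : ℕ} (hL : 2 ≤ L) (hM : 2 ≤ M) :
    8 * Nat.card {c : Cfg L M // ¬ Cyc c} ≤ 7 * Nat.card (Cfg L M) := by
  classical
  haveI : NeZero L := ⟨by omega⟩
  haveI : NeZero M := ⟨by omega⟩
  rw [Nat.card_eq_fintype_card, Nat.card_eq_fintype_card, Fintype.card_subtype]
  set U : Finset (Cfg L M) := Finset.univ with hUdef
  set A := U.filter (fun c => ach c 1 = 0) with hA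
  set C := U.filter (fun c => ¬ ach c 1 = 0) with hC
  set B := C.filter (fun c => bch c 1 = bch c 0) with hB
  set S := C.filter (fun c => ¬ bch c 1 = bch c 0) with hS
  set Sg := S.filter (fun c => Cyc c) with hSg
  set Sb := S.filter (fun c => ¬ Cyc c) with hSb
  have h1 : A.card + C.card = U.card :=
    Finset.card_filter_add_card_filter_not _
  have h2 : B.card + S.card = C.card :=
    Finset.card_filter_add_card_filter_not _
  have h3 : Sg.card + Sb.card = S.card :=
    Finset.card_filter_add_card_filter_not _
  -- injection 1 : A ↪ C
  have h4 : A.card ≤ C.card := by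
    refine Finset.card_le_card_of_injOn
      (fun c => (update c.1 (c.2 0) ⟨1, by omega⟩, c.2)) ?_ ?_
    · intro c hc
      rw [Finset.mem_coe, Finset.mem_filter] at hc
      rw [Finset.mem_coe, hC, Finset.mem_filter]
      refine ⟨Finset.mem_univ _, ?_⟩
      show ¬ update c.1 (c.2 0) ⟨1, by omega⟩ (c.2 0) = 0
      rw [update_self]
      exact fun h => by simpa [Fin.ext_iff] using h
    · intro c hc c' hc' he
      rw [Finset.mem_coe, Finset.mem_filter] at hc hc'
      simp only [Prod.mk.injEq] at he
      obtain ⟨e1, e2⟩ := he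
      have r1 : ∀ d : Cfg L M, ach d 1 = 0 →
          d.1 = update (update d.1 (d.2 0) ⟨1, by omega⟩) (d.2 0) 0 := by
        intro d hd
        rw [update_idem, eq_comm, update_eq_self_iff, ← ach_one, hd]
      have := r1 c hc.2
      rw [e1, e2] at this
      rw [← r1 c' hc'.2] at this
      exact Prod.ext (this) e2
  -- injection 2 : B ↪ S
  have h5 : B.card ≤ S.card := by
    set flip : Fin M → Fin M := fun b => if b = 0 then ⟨1, by omega⟩ else 0 with hflip
    have flip_ne : ∀ b, flip b ≠ b := by
      intro b
      by_cases h : b = 0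
      · subst h
        simp only [hflip, if_pos rfl]
        intro he
        simpa [Fin.ext_iff] using he
      · simp only [hflip, if_neg h]
        exact fun he => h he.symm
    refine Finset.card_le_card_of_injOn
      (fun c => (c.1, update c.2 (ach c 1) (flip (c.2 0)))) ?_ ?_
    · intro c hc
      rw [Finset.mem_coe, Finset.mem_filter, hC, Finset.mem_filter] at hc
      obtain ⟨⟨-, hc1⟩, hc2⟩ := hc
      rw [Finset.mem_coe, hS, Finset.mem_filter, hC, Finset.mem_filter]
      set c' : Cfg L M := (c.1, update c.2 (ach c 1) (flip (c.2 0))) with hc'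
      have e0 : c'.2 0 = c.2 0 := by
        rw [hc']
        exact update_of_ne (fun h => hc1 h.symm) _ _
      have e1 : ach c' 1 = ach c 1 := by
        rw [ach_one, ach_one, e0]
      refine ⟨⟨Finset.mem_univ _, ?_⟩, ?_⟩
      · rw [e1]; exact hc1
      · rw [bch_one, bch_zero, e1, e0]
        show ¬ update c.2 (ach c 1) (flip (c.2 0)) (ach c 1) = c.2 0
        rw [update_self]
        exact fun h => (flip_ne (c.2 0)) (by rw [h])
    · intro c hc c' hc' he
      rw [Finset.mem_coe, Finset.mem_filter, hC, Finset.mem_filter] at hc hc'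
      simp only [Prod.mk.injEq] at he
      obtain ⟨e1, e2⟩ := he
      have key : ∀ d : Cfg L M, ¬ ach d 1 = 0 → bch d 1 = bch d 0 →
          d.2 = update (update d.2 (ach d 1) (flip (d.2 0))) (ach d 1) (d.2 0) := by
        intro d hd1 hd2
        rw [update_idem, eq_comm, update_eq_self_iff, ← bch_one, hd2, bch_zero]
      have k1 := key c hc.1.2 hc.2
      have k2 := key c' hc'.1.2 hc'.2
      -- ach c 1 computable from image
      have a1 : ach c 1 = c.1 ((update c.2 (ach c 1) (flip (c.2 0))) 0) := by
        rw [update_of_ne (fun h => hc.1.2 h.symm)]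
        rfl
      have a2 : ach c' 1 = c'.1 ((update c'.2 (ach c' 1) (flip (c'.2 0))) 0) := by
        rw [update_of_ne (fun h => hc'.1.2 h.symm)]
        rfl
      have eq_ach : ach c 1 = ach c' 1 := by
        rw [a1, a2, e1, e2]
      have eq20 : c.2 0 = c'.2 0 := by
        have := congrFun e2 0
        rwa [update_of_ne (fun h => hc.1.2 h.symm),
          update_of_ne (fun h => hc'.1.2 h.symm)] at this
      have e3 : c.2 = c'.2 := by rw [k1, k2, e2, eq_ach, eq20]
      exact Prod.ext e1 e3
  -- injection 3 : Sb ↪ Sg via chain surgery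
  have h6 : Sb.card ≤ Sg.card := by
    refine Finset.card_le_card_of_injOn
      (fun c => if Bdis c then sgA c else sgB c) ?_ ?_
    · intro c hc
      rw [Finset.mem_coe, Finset.mem_filter, hS, Finset.mem_filter, hC, Finset.mem_filter] at hc
      obtain ⟨⟨⟨-, hx1⟩, hx2⟩, hnc⟩ := hc
      rw [Finset.mem_coe, hSg, Finset.mem_filter, hS, Finset.mem_filter, hC, Finset.mem_filter]
      by_cases hbd : Bdis c
      · simp only [if_pos hbd]
        obtain ⟨s1, s2⟩ := S2A hbd hx1 hx2
        exact ⟨⟨⟨Finset.mem_univ _, s1⟩, s2⟩, goodA hbd hx1⟩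
      · simp only [if_neg hbd]
        obtain ⟨s1, s2⟩ := S2B hbd hx1 hx2
        exact ⟨⟨⟨Finset.mem_univ _, s1⟩, s2⟩, goodB hbd hx1 hx2⟩
    · intro c hc c' hc' he
      rw [Finset.mem_coe, Finset.mem_filter, hS, Finset.mem_filter, hC,
        Finset.mem_filter] at hc hc'
      obtain ⟨⟨⟨-, hx1⟩, hx2⟩, hnc⟩ := hc
      obtain ⟨⟨⟨-, hx1'⟩, hx2'⟩, hnc'⟩ := hc'
      have hbad := notCyc_bad c hnc
      have hbad' := notCyc_bad c' hnc'
      simp only at he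
      by_cases hbd : Bdis c <;> by_cases hbd' : Bdis c'
      · rw [if_pos hbd, if_pos hbd'] at he
        obtain ⟨ra1, ra2⟩ := recA hbd hbad
        obtain ⟨rb1, rb2⟩ := recA hbd' hbad'
        rw [he] at ra1 ra2
        exact Prod.ext (ra1.symm.trans rb1) (ra2.symm.trans rb2)
      · exfalso
        rw [if_pos hbd, if_neg hbd'] at he
        exact sigB hbd' hx1' hx2' (by rw [← he]; exact sigA hbd)
      · exfalso
        rw [if_neg hbd, if_pos hbd'] at he
        exact sigB hbd hx1 hx2 (by rw [he]; exact sigA hbd')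
      · rw [if_neg hbd, if_neg hbd'] at he
        obtain ⟨ra1, ra2⟩ := recB hbd hbad hx1 hx2
        obtain ⟨rb1, rb2⟩ := recB hbd' hbad' hx1' hx2'
        rw [he] at ra1 ra2
        exact Prod.ext (ra1.symm.trans rb1) (ra2.symm.trans rb2)
  -- the acyclic set is covered by A, B, Sb
  have h7 : (U.filter (fun c => ¬ Cyc c)).card ≤ A.card + (B.card + Sb.card) := by
    refine le_trans (Finset.card_le_card ?_) (le_trans (Finset.card_union_le _ _)
      (by gcongr; exact Finset.card_union_le _ _))
    intro c hc
    rw [Finset.mem_filter] at hc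
    rw [Finset.mem_union, Finset.mem_union]
    by_cases p1 : ach c 1 = 0
    · exact Or.inl (by rw [hA, Finset.mem_filter]; exact ⟨hc.1, p1⟩)
    · by_cases p2 : bch c 1 = bch c 0
      · refine Or.inr (Or.inl ?_)
        rw [hB, Finset.mem_filter, hC, Finset.mem_filter]
        exact ⟨⟨hc.1, p1⟩, p2⟩
      · refine Or.inr (Or.inr ?_)
        rw [hSb, Finset.mem_filter, hS, Finset.mem_filter, hC, Finset.mem_filter]
        exact ⟨⟨⟨hc.1, p1⟩, p2⟩, hc.2⟩
  have h8 : U.card = Fintype.card (Cfg L M) := Finset.card_univ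
  omega

/-! ## Global definitions -/

section Glob
variable {n : ℕ} {k : Fin n → ℕ}

def pi1 (s : Fin (n / 2)) : Fin n := ⟨2 * s.1, by have := s.is_lt; omega⟩
def pi2 (s : Fin (n / 2)) : Fin n := ⟨2 * s.1 + 1, by have := s.is_lt; omega⟩

lemma pi1_ne_pi2 (s : Fin (n / 2)) : pi1 s ≠ pi2 s := by
  simp [pi1, pi2, Fin.ext_iff]

/-- Index of the family of planes. -/
abbrev PIdx (n : ℕ) (k : Fin n → ℕ) :=
  Σ s : Fin (n / 2), ∀ t : {t : Fin n // t ≠ pi1 s ∧ t ≠ pi2 s}, Fin (k t.1)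

/-- Embedding of a plane into the vertex set. -/
def Vx (z : PIdx n k) (x : Fin (k (pi1 z.1))) (y : Fin (k (pi2 z.1))) :
    GVert n k := fun t =>
  if h1 : t = pi1 z.1 then Fin.cast (congrArg k h1.symm) x
  else if h2 : t = pi2 z.1 then Fin.cast (congrArg k h2.symm) y
  else z.2 ⟨t, h1, h2⟩

lemma Vx_pi1 (z : PIdx n k) (x : Fin (k (pi1 z.1))) (y : Fin (k (pi2 z.1))) :
    Vx z x y (pi1 z.1) = x := by
  rw [Vx, dif_pos rfl]
  exact Fin.ext (Fin.coe_cast _ _)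

lemma Vx_pi2 (z : PIdx n k) (x : Fin (k (pi1 z.1))) (y : Fin (k (pi2 z.1))) :
    Vx z x y (pi2 z.1) = y := by
  rw [Vx, dif_neg (Ne.symm (pi1_ne_pi2 z.1)), dif_pos rfl]
  exact Fin.ext (Fin.coe_cast _ _)

lemma Vx_other (z : PIdx n k) (x : Fin (k (pi1 z.1))) (y : Fin (k (pi2 z.1)))
    {t : Fin n} (h1 : t ≠ pi1 z.1) (h2 : t ≠ pi2 z.1) :
    Vx z x y t = z.2 ⟨t, h1, h2⟩ := by
  rw [Vx, dif_neg h1, dif_neg h2]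

lemma Vx_inj (z : PIdx n k) {x x' : Fin (k (pi1 z.1))} {y y' : Fin (k (pi2 z.1))}
    (h : Vx z x y = Vx z x' y') : x = x' ∧ y = y' := by
  constructor
  · rw [← Vx_pi1 z x y, ← Vx_pi1 z x' y', h]
  · rw [← Vx_pi2 z x y, ← Vx_pi2 z x' y', h]

def lineI (z : PIdx n k) (y : Fin (k (pi2 z.1))) :
    ∀ j : {j : Fin n // j ≠ pi1 z.1}, Fin (k j.1) := fun j =>
  if h2 : j.1 = pi2 z.1 then Fin.cast (congrArg k h2.symm) y else z.2 ⟨j.1, j.2, h2⟩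

def lineJ (z : PIdx n k) (x : Fin (k (pi1 z.1))) :
    ∀ j : {j : Fin n // j ≠ pi2 z.1}, Fin (k j.1) := fun j =>
  if h1 : j.1 = pi1 z.1 then Fin.cast (congrArg k h1.symm) x else z.2 ⟨j.1, h1, j.2⟩

lemma lineI_eq (z : PIdx n k) (x : Fin (k (pi1 z.1))) (y : Fin (k (pi2 z.1))) :
    (fun j : {j : Fin n // j ≠ pi1 z.1} => Vx z x y j.1) = lineI z y := by
  funext j
  rw [Vx, lineI, dif_neg j.2]

lemma lineJ_eq (z : PIdx n k) (x : Fin (k (pi1 z.1))) (y : Fin (k (pi2 z.1))) :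
    (fun j : {j : Fin n // j ≠ pi2 z.1} => Vx z x y j.1) = lineJ z x := by
  funext j
  rw [Vx, lineJ]
  by_cases h1 : j.1 = pi1 z.1
  · rw [dif_pos h1, dif_pos h1]
  · rw [dif_neg h1, dif_neg h1, dif_neg j.2]

def uu (z : PIdx n k) (ω : LSpace n k) (y : Fin (k (pi2 z.1))) :
    Fin (k (pi1 z.1)) := ω (pi1 z.1) (lineI z y)

def vv (z : PIdx n k) (ω : LSpace n k) (x : Fin (k (pi1 z.1))) :
    Fin (k (pi2 z.1)) := ω (pi2 z.1) (lineJ z x)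

def cfg (z : PIdx n k) (ω : LSpace n k) : Cfg (k (pi1 z.1)) (k (pi2 z.1)) :=
  (uu z ω, vv z ω)

lemma edge_i (z : PIdx n k) (ω : LSpace n k) {x x' : Fin (k (pi1 z.1))}
    {y : Fin (k (pi2 z.1))} (hne : x ≠ x') (hw : uu z ω y = x') :
    BREdge ω (Vx z x y) (Vx z x' y) := by
  constructor
  · intro h
    exact hne (Vx_inj z h).1
  · refine ⟨pi1 z.1, ?_, ?_⟩
    · intro j hj
      by_cases h2 : j = pi2 z.1
      · subst h2; rw [Vx_pi2, Vx_pi2]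
      · rw [Vx_other z _ _ hj h2, Vx_other z _ _ hj h2]
    · show ω (pi1 z.1) (fun j : {j : Fin n // j ≠ pi1 z.1} => Vx z x' y j.1) = _
      rw [lineI_eq, Vx_pi1]
      exact hw

lemma edge_j (z : PIdx n k) (ω : LSpace n k) {x : Fin (k (pi1 z.1))}
    {y y' : Fin (k (pi2 z.1))} (hne : y ≠ y') (hw : vv z ω x = y') :
    BREdge ω (Vx z x y) (Vx z x y') := by
  constructor
  · intro h
    exact hne (Vx_inj z h).2
  · refine ⟨pi2 z.1, ?_, ?_⟩
    · intro j hj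
      by_cases h1 : j = pi1 z.1
      · subst h1; rw [Vx_pi1, Vx_pi1]
      · rw [Vx_other z _ _ h1 hj, Vx_other z _ _ h1 hj]
    · show ω (pi2 z.1) (fun j : {j : Fin n // j ≠ pi2 z.1} => Vx z x y' j.1) = _
      rw [lineJ_eq, Vx_pi2]
      exact hw

end Glob

section Lift
variable {n : ℕ} {k : Fin n → ℕ}

theorem lift_cyc (z : PIdx n k) (ω : LSpace n k)
    (h : Cyc (cfg z ω)) : HasCycle ω := by
  obtain ⟨a, p, hp, hper, hne⟩ := h
  set χ : Fin (k (pi1 z.1)) → Fin (k (pi1 z.1)) := chi (cfg z ω) with hχ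
  have exq : ∃ q, 0 < q ∧ χ^[q] a = a := ⟨p, hp, hper⟩
  classical
  set q := Nat.find exq with hqdef
  obtain ⟨hq0, hqa⟩ : 0 < q ∧ χ^[q] a = a := Nat.find_spec exq
  have hqmin : ∀ t, 0 < t → t < q → χ^[t] a ≠ a := by
    intro t ht1 ht2 he
    exact Nat.find_min exq ht2 ⟨ht1, he⟩
  have hq2 : 2 ≤ q := by
    rcases Nat.lt_or_ge q 2 with h | h
    · exfalso
      have : q = 1 := by omega
      rw [this] at hqa
      exact hne (by simpa using hqa)
    · exact h
  set A : ℕ → Fin (k (pi1 z.1)) := fun w => χ^[w] a with hA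
  set B : ℕ → Fin (k (pi2 z.1)) := fun w => vv z ω (A w) with hB
  have A_succ : ∀ w, A (w + 1) = uu z ω (B w) := by
    intro w
    show χ^[w+1] a = _
    rw [Function.iterate_succ_apply']
    rfl
  have A_add : ∀ x w, A (x + w) = χ^[x] (A w) := by
    intro x w
    exact Function.iterate_add_apply χ x w a
  have A_inj : ∀ w w', w < q → w' < q → A w = A w' → w = w' := by
    have key : ∀ w w', w < w' → w' < q → A w ≠ A w' := by
      intro w w' hlt hq he
      have h1 : χ^[q - w'] (A w') = a := by
        rw [← A_add]
        rw [show q - w' + w' = q by omega]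
        exact hqa
      have h2 : χ^[q - w'] (A w) = A (q - w' + w) := (A_add _ _).symm
      rw [he, h1] at h2
      exact hqmin (q - w' + w) (by omega) (by omega) h2.symm
    intro w w' h1 h2 he
    rcases lt_trichotomy w w' with h | h | h
    · exact absurd he (key w w' h h2)
    · exact h
    · exact absurd he.symm (key w' w h h1)
  have A_q : A q = A 0 := hqa
  have A_succ_mod : ∀ w, w < q → A ((w + 1) % q) = uu z ω (B w) := by
    intro w hw
    rcases Nat.lt_or_ge (w + 1) q with h | h
    · rw [Nat.mod_eq_of_lt h]
      exact A_succ w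
    · have hwq : w + 1 = q := by omega
      rw [hwq, Nat.mod_self, ← A_q, ← hwq]
      exact A_succ w
  have mod_lt : ∀ w, (w + 1) % q < q := fun w => Nat.mod_lt _ (by omega)
  have mod_ne : ∀ w, w < q → (w + 1) % q ≠ w := by
    intro w hw
    rcases Nat.lt_or_ge (w + 1) q with h1 | h1
    · rw [Nat.mod_eq_of_lt h1]; omega
    · have : w + 1 = q := by omega
      rw [this, Nat.mod_self]; omega
  have B_inj : ∀ w w', w < q → w' < q → B w = B w' → w = w' := by
    intro w w' h1 h2 he
    have e1 : A ((w + 1) % q) = A ((w' + 1) % q) := by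
      rw [A_succ_mod w h1, A_succ_mod w' h2, he]
    have e2 : (w + 1) % q = (w' + 1) % q := A_inj _ _ (mod_lt w) (mod_lt w') e1
    rcases Nat.lt_or_ge (w + 1) q with g1 | g1 <;>
      rcases Nat.lt_or_ge (w' + 1) q with g2 | g2
    · rw [Nat.mod_eq_of_lt g1, Nat.mod_eq_of_lt g2] at e2; omega
    · rw [Nat.mod_eq_of_lt g1, show w' + 1 = q by omega, Nat.mod_self] at e2; omega
    · rw [Nat.mod_eq_of_lt g2, show w + 1 = q by omega, Nat.mod_self] at e2; omega
    · omega
  have A_adj : ∀ w, w < q → A ((w + 1) % q) ≠ A w := by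
    intro w hw he
    exact mod_ne w hw (A_inj _ _ (mod_lt w) hw he)
  have B_adj : ∀ w, w < q → B ((w + 1) % q) ≠ B w := by
    intro w hw he
    exact mod_ne w hw (B_inj _ _ (mod_lt w) hw he)
  -- build the cycle
  refine ⟨2 * q, ⟨by omega, ?_⟩⟩
  refine ⟨fun r => if r.1 % 2 = 0 then Vx z (A (r.1 / 2)) (B (r.1 / 2))
    else Vx z (A ((r.1 / 2 + 1) % q)) (B (r.1 / 2)), ?_, ?_⟩
  · -- injectivity
    intro r r' he
    have hr := r.is_lt
    have hr' := r'.is_lt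
    have hw : r.1 / 2 < q := by omega
    have hw' : r'.1 / 2 < q := by omega
    simp only at he
    by_cases p1 : r.1 % 2 = 0 <;> by_cases p2 : r'.1 % 2 = 0
    · rw [if_pos p1, if_pos p2] at he
      obtain ⟨-, e2⟩ := Vx_inj z he
      have := B_inj _ _ hw hw' e2
      exact Fin.ext (by omega)
    · exfalso
      rw [if_pos p1, if_neg p2] at he
      obtain ⟨e1, e2⟩ := Vx_inj z he
      have hww : r.1 / 2 = r'.1 / 2 := B_inj _ _ hw hw' e2
      rw [hww] at e1
      exact A_adj _ hw' e1.symm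
    · exfalso
      rw [if_neg p1, if_pos p2] at he
      obtain ⟨e1, e2⟩ := Vx_inj z he
      have hww : r.1 / 2 = r'.1 / 2 := B_inj _ _ hw hw' e2
      rw [hww] at e1
      exact A_adj _ hw' e1
    · rw [if_neg p1, if_neg p2] at he
      obtain ⟨-, e2⟩ := Vx_inj z he
      have := B_inj _ _ hw hw' e2
      exact Fin.ext (by omega)
  · -- edges
    intro r
    have hr := r.is_lt
    have hw : r.1 / 2 < q := by omega
    have hsucc : ((r + ⟨1, by omega⟩ : Fin (2 * q))).1 = (r.1 + 1) % (2 * q) := rfl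
    by_cases p1 : r.1 % 2 = 0
    · -- i-direction edge
      have h1 : (r.1 + 1) % (2 * q) = r.1 + 1 := Nat.mod_eq_of_lt (by omega)
      have h2 : (r.1 + 1) % 2 ≠ 0 := by omega
      have h3 : (r.1 + 1) / 2 = r.1 / 2 := by omega
      simp only [hsucc, h1, if_pos p1, if_neg h2, h3]
      exact edge_i z ω (Ne.symm (A_adj _ hw)) (A_succ_mod _ hw).symm
    · -- j-direction edge
      have h2 : (r.1 + 1) % 2 = 0 := by omega
      rcases Nat.lt_or_ge (r.1 + 1) (2 * q) with g | g
      · have h1 : (r.1 + 1) % (2 * q) = r.1 + 1 := Nat.mod_eq_of_lt g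
        have h3 : (r.1 + 1) / 2 = r.1 / 2 + 1 := by omega
        have h4 : r.1 / 2 + 1 < q := by omega
        have h5 : (r.1 / 2 + 1) % q = r.1 / 2 + 1 := Nat.mod_eq_of_lt h4
        simp only [hsucc, h1, if_neg p1, if_pos h2, h3, h5]
        rw [← h5]
        exact edge_j z ω (Ne.symm (B_adj _ hw)) rfl
      · have hr1 : r.1 + 1 = 2 * q := by omega
        have h1 : (r.1 + 1) % (2 * q) = 0 := by rw [hr1, Nat.mod_self]
        have h6 : r.1 / 2 = q - 1 := by omega
        have h7 : (r.1 / 2 + 1) % q = 0 := by rw [h6, show q - 1 + 1 = q by omega, Nat.mod_self]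
        simp only [hsucc, h1, if_neg p1, if_pos (by norm_num : (0:ℕ) % 2 = 0)]
        have h8 : (0:ℕ) / 2 = 0 := by norm_num
        rw [h8, h7]
        have h9 : (0:ℕ) = (r.1 / 2 + 1) % q := h7.symm
        rw [show A 0 = A ((r.1 / 2 + 1) % q) by rw [h7], show B 0 = B ((r.1 / 2 + 1) % q) by rw [h7]]
        exact edge_j z ω (Ne.symm (B_adj _ hw)) rfl

section Count
variable {n : ℕ} {k : Fin n → ℕ}

lemma pi1_inj {s s' : Fin (n / 2)} (h : pi1 (n := n) s = pi1 s') : s = s' := by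
  simp only [pi1, Fin.ext_iff] at h ⊢
  omega

lemma pi2_inj {s s' : Fin (n / 2)} (h : pi2 (n := n) s = pi2 s') : s = s' := by
  simp only [pi2, Fin.ext_iff] at h ⊢
  omega

lemma pi1_ne_pi2' (s s' : Fin (n / 2)) : pi1 (n := n) s ≠ pi2 s' := by
  intro h
  have h2 := congrArg Fin.val h
  simp only [pi1, pi2] at h2
  omega

abbrev XIdx (n : ℕ) (k : Fin n → ℕ) :=
  Σ i : Fin n, (∀ j : {j : Fin n // j ≠ i}, Fin (k j.1))

abbrev OmX (n : ℕ) (k : Fin n → ℕ) := ∀ x : XIdx n k, Fin (k x.1)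

def gg : (Σ z : PIdx n k, (Fin (k (pi2 z.1)) ⊕ Fin (k (pi1 z.1)))) → XIdx n k
  | ⟨z, Sum.inl y⟩ => ⟨pi1 z.1, lineI z y⟩
  | ⟨z, Sum.inr x⟩ => ⟨pi2 z.1, lineJ z x⟩

lemma gg_inj : Function.Injective (gg (n := n) (k := k)) := by
  rintro ⟨⟨s, c⟩, t⟩ ⟨⟨s', c'⟩, t'⟩ he
  cases t with
  | inl y =>
    cases t' with
    | inl y' =>
      have h1 : pi1 s = pi1 s' := congrArg Sigma.fst he
      have hs : s = s' := pi1_inj h1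
      subst hs
      have h2 : lineI (n := n) (k := k) ⟨s, c⟩ y = lineI ⟨s, c'⟩ y' :=
        eq_of_heq (Sigma.mk.inj_iff.mp he).2
      have hy : y = y' := by
        have h3 := congrFun h2 ⟨pi2 s, (pi1_ne_pi2 s).symm⟩
        rw [lineI, lineI, dif_pos rfl, dif_pos rfl] at h3
        exact Fin.ext (by simpa [Fin.ext_iff] using congrArg Fin.val h3)
      subst hy
      have hc : c = c' := by
        funext tt
        have h3 := congrFun h2 ⟨tt.1, tt.2.1⟩
        rw [lineI, lineI, dif_neg tt.2.2, dif_neg tt.2.2] at h3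
        exact h3
      subst hc
      rfl
    | inr x' =>
      exact absurd (congrArg Sigma.fst he) (pi1_ne_pi2' s s')
  | inr x =>
    cases t' with
    | inl y' =>
      exact absurd (congrArg Sigma.fst he).symm (pi1_ne_pi2' s' s)
    | inr x' =>
      have h1 : pi2 s = pi2 s' := congrArg Sigma.fst he
      have hs : s = s' := pi2_inj h1
      subst hs
      have h2 : lineJ (n := n) (k := k) ⟨s, c⟩ x = lineJ ⟨s, c'⟩ x' :=
        eq_of_heq (Sigma.mk.inj_iff.mp he).2
      have hx : x = x' := by
        have h3 := congrFun h2 ⟨pi1 s, pi1_ne_pi2 s⟩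
        rw [lineJ, lineJ, dif_pos rfl, dif_pos rfl] at h3
        exact Fin.ext (by simpa [Fin.ext_iff] using congrArg Fin.val h3)
      subst hx
      have hc : c = c' := by
        funext tt
        have h3 := congrFun h2 ⟨tt.1, tt.2.2⟩
        rw [lineJ, lineJ, dif_neg tt.2.1, dif_neg tt.2.1] at h3
        exact h3
      subst hc
      rfl

abbrev Wz (z : PIdx n k) := ∀ t : Fin (k (pi2 z.1)) ⊕ Fin (k (pi1 z.1)),
  Fin (k (gg ⟨z, t⟩).1)

def rst (ω : OmX n k) (z : PIdx n k) : Wz z := fun t => ω (gg ⟨z, t⟩)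

abbrev RestT (n : ℕ) (k : Fin n → ℕ) :=
  ∀ y : {x : XIdx n k // x ∉ Set.range (gg (n := n) (k := k))}, Fin (k y.1.1)

noncomputable def EE : OmX n k ≃ (∀ z : PIdx n k, Wz z) × RestT n k := by
  classical
  exact {
    toFun := fun ω => (rst ω, fun y => ω y.1)
    invFun := fun pr x =>
      if h : x ∈ Set.range (gg (n := n) (k := k)) then
        cast (congrArg (fun x' : XIdx n k => Fin (k x'.1)) (Classical.choose_spec h))
          (pr.1 (Classical.choose h).1 (Classical.choose h).2)
      else pr.2 ⟨x, h⟩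
    left_inv := by
      intro ω
      funext x
      dsimp only
      by_cases h : x ∈ Set.range (gg (n := n) (k := k))
      · rw [dif_pos h]
        have key : ∀ (x' : XIdx n k) (zt) (hsp : gg zt = x'),
            cast (congrArg (fun v : XIdx n k => Fin (k v.1)) hsp) (rst ω zt.1 zt.2) = ω x' := by
          rintro x' zt rfl
          rfl
        exact key x (Classical.choose h) (Classical.choose_spec h)
      · rw [dif_neg h]
    right_inv := by
      intro pr
      refine Prod.ext ?_ ?_
      · funext z t
        have hmem : gg ⟨z, t⟩ ∈ Set.range (gg (n := n) (k := k)) := ⟨⟨z, t⟩, rfl⟩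
        dsimp only [rst]
        rw [dif_pos hmem, cast_eq_iff_heq]
        have he : Classical.choose hmem = ⟨z, t⟩ :=
          gg_inj (Classical.choose_spec hmem)
        rw [he]
      · funext y
        dsimp only
        rw [dif_neg y.2]
  }

def cf2 (z : PIdx n k) (w : Wz z) : Cfg (k (pi1 z.1)) (k (pi2 z.1)) :=
  (fun y => w (Sum.inl y), fun x => w (Sum.inr x))

def ecfg (z : PIdx n k) : Wz z ≃ Cfg (k (pi1 z.1)) (k (pi2 z.1)) where
  toFun := cf2 z
  invFun := fun c t => Sum.rec (motive := fun t => Fin (k (gg ⟨z, t⟩).1))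
    (fun y => c.1 y) (fun x => c.2 x) t
  left_inv := by
    intro w
    funext t
    cases t <;> rfl
  right_inv := fun c => rfl

lemma cfg_compat (z : PIdx n k) (ω : OmX n k) :
    cf2 z (rst ω z) = (fun y => ω (gg ⟨z, Sum.inl y⟩), fun x => ω (gg ⟨z, Sum.inr x⟩)) := rfl

end Count

section Count2
variable {n : ℕ} {k : Fin n → ℕ}

def e0 : LSpace n k ≃ OmX n k :=
  (Equiv.piCurry (fun (i : Fin n) (_ : ∀ j : {j : Fin n // j ≠ i}, Fin (k j.1)) =>
    Fin (k i))).symm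

def prodSub {A : Type*} {B : Type*} (P : A → Prop) :
    {p : A × B // P p.1} ≃ {a : A // P a} × B where
  toFun p := (⟨p.1.1, p.2⟩, p.1.2)
  invFun q := ⟨(q.1.1, q.2), q.1.2⟩
  left_inv _ := rfl
  right_inv _ := rfl

theorem count_main (hk : ∀ i, 2 ≤ k i) :
    8 ^ (Nat.card (PIdx n k)) * Nat.card {ω : LSpace n k | ¬ HasCycle ω} ≤
    7 ^ (Nat.card (PIdx n k)) * Fintype.card (LSpace n k) := by
  classical
  have hA : Nat.card {ω : LSpace n k | ¬ HasCycle ω} ≤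
      Nat.card {ω : LSpace n k | ∀ z : PIdx n k, ¬ Cyc (cfg z ω)} := by
    rw [Nat.card_coe_set_eq, Nat.card_coe_set_eq]
    exact Set.ncard_le_ncard (fun ω h z hc => h (lift_cyc z ω hc)) (Set.toFinite _)
  have hB : Nat.card {ω : LSpace n k | ∀ z : PIdx n k, ¬ Cyc (cfg z ω)}
      = (∏ z : PIdx n k, Nat.card {w : Wz z // ¬ Cyc (cf2 z w)}) *
        Nat.card (RestT n k) := by
    have e1 : {ω : LSpace n k // ∀ z : PIdx n k, ¬ Cyc (cfg z ω)} ≃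
        {pr : (∀ z : PIdx n k, Wz z) × RestT n k // ∀ z, ¬ Cyc (cf2 z (pr.1 z))} :=
      Equiv.subtypeEquiv ((e0 (n := n) (k := k)).trans EE) (fun ω => Iff.rfl)
    have e2 : {pr : (∀ z : PIdx n k, Wz z) × RestT n k //
          ∀ z, ¬ Cyc (cf2 z (pr.1 z))} ≃
        {f : ∀ z : PIdx n k, Wz z // ∀ z, ¬ Cyc (cf2 z (f z))} × RestT n k :=
      prodSub (fun f : ∀ z : PIdx n k, Wz z => ∀ z, ¬ Cyc (cf2 z (f z)))
    have e3 : {f : ∀ z : PIdx n k, Wz z // ∀ z, ¬ Cyc (cf2 z (f z))} ≃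
        ∀ z : PIdx n k, {w : Wz z // ¬ Cyc (cf2 z w)} :=
      Equiv.subtypePiEquivPi (p := fun z (w : Wz z) => ¬ Cyc (cf2 z w))
    have e4 := Nat.card_congr ((e1.trans e2).trans
      (Equiv.prodCongr e3 (Equiv.refl (RestT n k))))
    rw [Nat.card_prod, Nat.card_pi] at e4
    exact e4
  have hC : Fintype.card (LSpace n k) =
      (∏ z : PIdx n k, Nat.card (Wz z)) * Nat.card (RestT n k) := by
    rw [← Nat.card_eq_fintype_card,
      Nat.card_congr ((e0 (n := n) (k := k)).trans EE), Nat.card_prod, Nat.card_pi]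
  have hD : ∀ z : PIdx n k,
      8 * Nat.card {w : Wz z // ¬ Cyc (cf2 z w)} ≤ 7 * Nat.card (Wz z) := by
    intro z
    have h1 : Nat.card {w : Wz z // ¬ Cyc (cf2 z w)} =
        Nat.card {c : Cfg (k (pi1 z.1)) (k (pi2 z.1)) // ¬ Cyc c} :=
      Nat.card_congr (Equiv.subtypeEquiv (ecfg z) (fun w => Iff.rfl))
    have h2 : Nat.card (Wz z) = Nat.card (Cfg (k (pi1 z.1)) (k (pi2 z.1))) :=
      Nat.card_congr (ecfg z)
    rw [h1, h2]
    exact plane_count (hk _) (hk _)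
  have hNI : Nat.card (PIdx n k) = (Finset.univ : Finset (PIdx n k)).card := by
    rw [Nat.card_eq_fintype_card, Finset.card_univ]
  have hmain : 8 ^ (Nat.card (PIdx n k)) *
      (∏ z : PIdx n k, Nat.card {w : Wz z // ¬ Cyc (cf2 z w)}) ≤
      7 ^ (Nat.card (PIdx n k)) * ∏ z : PIdx n k, Nat.card (Wz z) := by
    rw [hNI, ← Finset.prod_const, ← Finset.prod_mul_distrib,
      ← Finset.prod_const, ← Finset.prod_mul_distrib]
    exact Finset.prod_le_prod' (fun z _ => hD z)
  calc 8 ^ (Nat.card (PIdx n k)) * Nat.card {ω : LSpace n k | ¬ HasCycle ω}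
      ≤ 8 ^ (Nat.card (PIdx n k)) *
        ((∏ z : PIdx n k, Nat.card {w : Wz z // ¬ Cyc (cf2 z w)}) *
          Nat.card (RestT n k)) := by
        rw [← hB]; exact Nat.mul_le_mul_left _ hA
    _ = (8 ^ (Nat.card (PIdx n k)) *
        (∏ z : PIdx n k, Nat.card {w : Wz z // ¬ Cyc (cf2 z w)})) *
          Nat.card (RestT n k) := by ring
    _ ≤ (7 ^ (Nat.card (PIdx n k)) * ∏ z : PIdx n k, Nat.card (Wz z)) *
          Nat.card (RestT n k) := Nat.mul_le_mul_right _ hmain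
    _ = 7 ^ (Nat.card (PIdx n k)) * Fintype.card (LSpace n k) := by
        rw [hC]; ring
end Count2


theorem mainthm (n : ℕ) (hn : 2 ≤ n) (k : Fin n → ℕ) (hk : ∀ i, 2 ≤ k i)
    (km : ℕ) (hkm : ∀ i, km ≤ k i) (hex : ∃ i, k i = km) :
    ({ω : LSpace n k | ¬ HasCycle ω}.ncard : ℝ) / (Fintype.card (LSpace n k)) ≤
      Real.exp (-(Real.log (8/7) / 4 * n * km ^ (n - 2))) := by
  classical
  obtain ⟨i0, hi0⟩ := hex
  set NI := Nat.card (PIdx n k) with hNIdef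
  -- lower bound on the number of planes
  have hNI : n * km ^ (n - 2) ≤ 4 * NI := by
    have hcard : NI = ∑ s : Fin (n / 2),
        ∏ t : {t : Fin n // t ≠ pi1 s ∧ t ≠ pi2 s}, k t.1 := by
      rw [hNIdef, Nat.card_eq_fintype_card, Fintype.card_sigma]
      refine Finset.sum_congr rfl (fun s _ => ?_)
      simp [Fintype.card_pi]
    have hsub : ∀ s : Fin (n / 2), km ^ (n - 2) ≤
        ∏ t : {t : Fin n // t ≠ pi1 s ∧ t ≠ pi2 s}, k t.1 := by
      intro s
      have hcs : Fintype.card {t : Fin n // t ≠ pi1 s ∧ t ≠ pi2 s} = n - 2 := by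
        rw [Fintype.card_subtype]
        have hset : Finset.univ.filter (fun t : Fin n => t ≠ pi1 s ∧ t ≠ pi2 s)
            = Finset.univ \ {pi1 s, pi2 s} := by
          ext t
          simp only [Finset.mem_filter, Finset.mem_univ, true_and,
            Finset.mem_sdiff, Finset.mem_insert, Finset.mem_singleton]
          tauto
        rw [hset, Finset.card_sdiff_of_subset (Finset.subset_univ _),
          Finset.card_pair (pi1_ne_pi2 s)]
        simp
      have := Finset.pow_card_le_prod Finset.univ
        (fun t : {t : Fin n // t ≠ pi1 s ∧ t ≠ pi2 s} => k t.1) km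
        (fun t _ => hkm t.1)
      rwa [Finset.card_univ, hcs] at this
    have hsum : (n / 2) * km ^ (n - 2) ≤ NI := by
      rw [hcard]
      calc (n / 2) * km ^ (n - 2)
          = ∑ _s : Fin (n / 2), km ^ (n - 2) := by
            rw [Finset.sum_const, Finset.card_univ, Fintype.card_fin, smul_eq_mul]
        _ ≤ _ := Finset.sum_le_sum (fun s _ => hsub s)
    have h4 : n ≤ 4 * (n / 2) := by omega
    calc n * km ^ (n - 2) ≤ (4 * (n / 2)) * km ^ (n - 2) :=
          Nat.mul_le_mul_right _ h4
      _ = 4 * ((n / 2) * km ^ (n - 2)) := by ring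
      _ ≤ 4 * NI := Nat.mul_le_mul_left _ hsum
  have htot : 0 < Fintype.card (LSpace n k) :=
    Fintype.card_pos_iff.mpr ⟨fun i _ => ⟨0, by have := hk i; omega⟩⟩
  have hcm := count_main (n := n) (k := k) hk
  have hnc : {ω : LSpace n k | ¬ HasCycle ω}.ncard
      = Nat.card {ω : LSpace n k | ¬ HasCycle ω} :=
    (Nat.card_coe_set_eq _).symm
  rw [hnc, div_le_iff₀ (by exact_mod_cast htot)]
  have h8 : (0 : ℝ) < 8 ^ NI := by positivity
  have step1 : (Nat.card {ω : LSpace n k | ¬ HasCycle ω} : ℝ) ≤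
      (7 / 8) ^ NI * Fintype.card (LSpace n k) := by
    rw [div_pow, div_mul_eq_mul_div, le_div_iff₀ h8]
    have hcast : ((8 ^ NI * Nat.card {ω : LSpace n k | ¬ HasCycle ω} : ℕ) : ℝ) ≤
        ((7 ^ NI * Fintype.card (LSpace n k) : ℕ) : ℝ) := Nat.cast_le.mpr hcm
    push_cast at hcast
    linarith
  have step2 : ((7 : ℝ) / 8) ^ NI ≤
      Real.exp (-(Real.log (8/7) / 4 * n * km ^ (n - 2))) := by
    have hlog : 0 < Real.log (8 / 7) := Real.log_pos (by norm_num)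
    have e1 : ((7 : ℝ) / 8) ^ NI = Real.exp ((NI : ℝ) * Real.log (7 / 8)) := by
      rw [Real.exp_nat_mul, Real.exp_log (by norm_num : (0:ℝ) < 7 / 8)]
    rw [e1, Real.exp_le_exp]
    have e2 : Real.log (7 / 8) = - Real.log (8 / 7) := by
      rw [show (7 : ℝ) / 8 = (8 / 7)⁻¹ by norm_num, Real.log_inv]
    rw [e2]
    have hNIr : (n : ℝ) * (km : ℝ) ^ (n - 2) ≤ 4 * NI := by
      have := (Nat.cast_le (α := ℝ)).mpr hNI
      push_cast at this
      linarith
    have hKnn : (0 : ℝ) ≤ (n : ℝ) * (km : ℝ) ^ (n - 2) := by positivity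
    have := mul_le_mul_of_nonneg_left hNIr hlog.le
    nlinarith
  calc (Nat.card {ω : LSpace n k | ¬ HasCycle ω} : ℝ)
      ≤ (7 / 8) ^ NI * Fintype.card (LSpace n k) := step1
    _ ≤ Real.exp (-(Real.log (8/7) / 4 * n * km ^ (n - 2))) *
        Fintype.card (LSpace n k) := by
        exact mul_le_mul_of_nonneg_right step2 (by positivity)

/-- There is a constant `c > 0` such that for all `n ≥ 2` and all `k` with each
`kᵢ ≥ 2`, the probability that `L(n,k)` is acyclic is at most
`exp(-c n k_min^(n-2))`. -/
theorem stmt16 :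
    ∃ c : ℝ, 0 < c ∧ ∀ n : ℕ, 2 ≤ n → ∀ k : Fin n → ℕ, (∀ i, 2 ≤ k i) →
      ∀ km : ℕ, (∀ i, km ≤ k i) → (∃ i, k i = km) →
        ({ω : LSpace n k | ¬ HasCycle ω}.ncard : ℝ) / (Fintype.card (LSpace n k)) ≤
          Real.exp (-(c * n * km ^ (n - 2))) := by
  refine ⟨Real.log (8 / 7) / 4, div_pos (Real.log_pos (by norm_num)) (by norm_num), ?_⟩
  intro n hn k hk km hkm hex
  exact mainthm n hn k hk km hkm hex
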